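/- In every 2-page book embedding of the double ladder of length ℓ, for each i ∈ {0,…,ℓ−1}, each of the vertices u_i, v_i, w_i precedes each of the vertices u_{i+1}, v_{i+1}, w_{i+1} in the spine order. -/
import Mathlib


/-- A 2-page book embedding of the DAG on vertex type `V` with edge relation `E`:
a spine position function (an injective topological order) together with an
assignment of edges to two pages such that no two same-page edges cross. -/
structure TwoPageEmbedding (V : Type*) (E : V → V → Prop) where
  pos : V → ℕ
  pos_inj : Function.Injective pos
  topo : ∀ ⦃a b : V⦄, E a b → pos a < pos b
  page : V → V → Bool
  no_cross : ∀ a b c d : V, E a b → E c d → page a b = page c d →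
    ¬ (pos a < pos c ∧ pos c < pos b ∧ pos b < pos d)

/-- `a` and `b` occupy consecutive spine positions, with `a` before `b`. -/
def TwoPageEmbedding.Consec {V : Type*} {E : V → V → Prop}
    (emb : TwoPageEmbedding V E) (a b : V) : Prop :=
  emb.pos a < emb.pos b ∧
    ∀ x : V, ¬ (emb.pos a < emb.pos x ∧ emb.pos x < emb.pos b)

/-- `a` and `b` are spine-consecutive: no vertex lies strictly between them. -/
def TwoPageEmbedding.SpineConsec {V : Type*} {E : V → V → Prop}
    (emb : TwoPageEmbedding V E) (a b : V) : Prop :=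
  (∀ x : V, ¬ (emb.pos a < emb.pos x ∧ emb.pos x < emb.pos b)) ∧
  (∀ x : V, ¬ (emb.pos b < emb.pos x ∧ emb.pos x < emb.pos a))

/-- Names of the vertices of a double ladder. -/
inductive DLV : Type
  | s1 | s2 | t1 | t2
  | u (i : ℕ) | v (i : ℕ) | w (i : ℕ)

/-- Validity of a vertex name for the double ladder of length `ℓ`. -/
def DLV.valid (ℓ : ℕ) : DLV → Prop
  | .u i => i ≤ ℓ
  | .v i => i ≤ ℓ
  | .w i => i ≤ ℓ
  | _ => True

/-- The vertex set of the double ladder of length `ℓ`. -/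
def DLVert (ℓ : ℕ) : Type := {x : DLV // DLV.valid ℓ x}

def DLs1 (ℓ : ℕ) : DLVert ℓ := ⟨DLV.s1, trivial⟩
def DLs2 (ℓ : ℕ) : DLVert ℓ := ⟨DLV.s2, trivial⟩
def DLt1 (ℓ : ℕ) : DLVert ℓ := ⟨DLV.t1, trivial⟩
def DLt2 (ℓ : ℕ) : DLVert ℓ := ⟨DLV.t2, trivial⟩
def DLu (ℓ i : ℕ) (h : i ≤ ℓ) : DLVert ℓ := ⟨DLV.u i, h⟩
def DLv (ℓ i : ℕ) (h : i ≤ ℓ) : DLVert ℓ := ⟨DLV.v i, h⟩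
def DLw (ℓ i : ℕ) (h : i ≤ ℓ) : DLVert ℓ := ⟨DLV.w i, h⟩

/-- The edges of the double ladder of length `ℓ` (on vertex names). -/
inductive DLEdgeV (ℓ : ℕ) : DLV → DLV → Prop
  | s1u : DLEdgeV ℓ .s1 (.u 0)
  | s1v : DLEdgeV ℓ .s1 (.v 0)
  | s2v : DLEdgeV ℓ .s2 (.v 0)
  | s2w : DLEdgeV ℓ .s2 (.w 0)
  | ut1 : DLEdgeV ℓ (.u ℓ) .t1
  | vt1 : DLEdgeV ℓ (.v ℓ) .t1
  | vt2 : DLEdgeV ℓ (.v ℓ) .t2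
  | wt2 : DLEdgeV ℓ (.w ℓ) .t2
  | uu {i : ℕ} : i < ℓ → DLEdgeV ℓ (.u i) (.u (i + 1))
  | vu {i : ℕ} : i < ℓ → DLEdgeV ℓ (.v i) (.u (i + 1))
  | vv {i : ℕ} : i < ℓ → DLEdgeV ℓ (.v i) (.v (i + 1))
  | wv {i : ℕ} : i < ℓ → DLEdgeV ℓ (.w i) (.v (i + 1))
  | ww {i : ℕ} : i < ℓ → DLEdgeV ℓ (.w i) (.w (i + 1))

/-- The edge relation of the double ladder of length `ℓ`. -/
def DLEdge (ℓ : ℕ) (a b : DLVert ℓ) : Prop := DLEdgeV ℓ a.val b.val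

/-- Every vertex of the `i`-th triple precedes every vertex of the `j`-th triple
in the spine order of `emb`. -/
def TripleBefore {ℓ : ℕ} (emb : TwoPageEmbedding (DLVert ℓ) (DLEdge ℓ))
    (i j : ℕ) : Prop :=
  ∀ x y : DLVert ℓ,
    (x.val = DLV.u i ∨ x.val = DLV.v i ∨ x.val = DLV.w i) →
    (y.val = DLV.u j ∨ y.val = DLV.v j ∨ y.val = DLV.w j) →
    emb.pos x < emb.pos y

/-- Three pairwise-crossing edges are impossible with only two pages. -/
lemma noThreeRainbow {V : Type*} {E : V → V → Prop} (emb : TwoPageEmbedding V E)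
    {a1 b1 a2 b2 a3 b3 : V}
    (h1 : E a1 b1) (h2 : E a2 b2) (h3 : E a3 b3)
    (o1 : emb.pos a1 < emb.pos a2) (o2 : emb.pos a2 < emb.pos a3)
    (o3 : emb.pos a3 < emb.pos b1) (o4 : emb.pos b1 < emb.pos b2)
    (o5 : emb.pos b2 < emb.pos b3) : False := by
  have p12 : emb.page a1 b1 ≠ emb.page a2 b2 := fun h =>
    emb.no_cross _ _ _ _ h1 h2 h ⟨o1, o2.trans o3, o4⟩
  have p13 : emb.page a1 b1 ≠ emb.page a3 b3 := fun h =>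
    emb.no_cross _ _ _ _ h1 h3 h ⟨o1.trans o2, o3, o4.trans o5⟩
  have p23 : emb.page a2 b2 ≠ emb.page a3 b3 := fun h =>
    emb.no_cross _ _ _ _ h2 h3 h ⟨o2, o3.trans o4, o5⟩
  revert p12 p13 p23
  cases emb.page a1 b1 <;> cases emb.page a2 b2 <;> cases emb.page a3 b3 <;> simp

lemma pos_lt_of_not_lt {ℓ : ℕ} (emb : TwoPageEmbedding (DLVert ℓ) (DLEdge ℓ))
    {x y : DLVert ℓ} (hne : x.val ≠ y.val) (h : ¬ emb.pos x < emb.pos y) :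
    emb.pos y < emb.pos x :=
  lt_of_le_of_ne (not_lt.1 h)
    (fun he => hne (congrArg Subtype.val (emb.pos_inj he)).symm)

section DL
variable {ℓ : ℕ} (emb : TwoPageEmbedding (DLVert ℓ) (DLEdge ℓ))

/-- An edge into `u i` whose source precedes `v i`. -/
lemma exists_p (i : ℕ) (hi : i ≤ ℓ) :
    ∃ p : DLVert ℓ, DLEdge ℓ p ⟨.u i, hi⟩ ∧ emb.pos p < emb.pos ⟨.v i, hi⟩ := by
  cases i with
  | zero =>
      exact ⟨⟨.s1, trivial⟩, DLEdgeV.s1u,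
        emb.topo (show DLEdge ℓ ⟨.s1, trivial⟩ ⟨.v 0, hi⟩ from DLEdgeV.s1v)⟩
  | succ j =>
      have hj : j ≤ ℓ := Nat.le_of_succ_le hi
      exact ⟨⟨.v j, hj⟩, DLEdgeV.vu hi,
        emb.topo (show DLEdge ℓ ⟨.v j, hj⟩ ⟨.v (j+1), hi⟩ from DLEdgeV.vv hi)⟩

/-- An edge into `v i` whose source precedes `w i`. -/
lemma exists_q (i : ℕ) (hi : i ≤ ℓ) :
    ∃ q : DLVert ℓ, DLEdge ℓ q ⟨.v i, hi⟩ ∧ emb.pos q < emb.pos ⟨.w i, hi⟩ := by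
  cases i with
  | zero =>
      exact ⟨⟨.s2, trivial⟩, DLEdgeV.s2v,
        emb.topo (show DLEdge ℓ ⟨.s2, trivial⟩ ⟨.w 0, hi⟩ from DLEdgeV.s2w)⟩
  | succ j =>
      have hj : j ≤ ℓ := Nat.le_of_succ_le hi
      exact ⟨⟨.w j, hj⟩, DLEdgeV.wv hi,
        emb.topo (show DLEdge ℓ ⟨.w j, hj⟩ ⟨.w (j+1), hi⟩ from DLEdgeV.ww hi)⟩

/-- An edge into `w i` whose source precedes `v i`. -/
lemma exists_r (i : ℕ) (hi : i ≤ ℓ) :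
    ∃ r : DLVert ℓ, DLEdge ℓ r ⟨.w i, hi⟩ ∧ emb.pos r < emb.pos ⟨.v i, hi⟩ := by
  cases i with
  | zero =>
      exact ⟨⟨.s2, trivial⟩, DLEdgeV.s2w,
        emb.topo (show DLEdge ℓ ⟨.s2, trivial⟩ ⟨.v 0, hi⟩ from DLEdgeV.s2v)⟩
  | succ j =>
      have hj : j ≤ ℓ := Nat.le_of_succ_le hi
      exact ⟨⟨.w j, hj⟩, DLEdgeV.ww hi,
        emb.topo (show DLEdge ℓ ⟨.w j, hj⟩ ⟨.v (j+1), hi⟩ from DLEdgeV.wv hi)⟩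

/-- An edge out of `v k` whose target follows `u k`. -/
lemma exists_X (k : ℕ) (hk : k ≤ ℓ) :
    ∃ X : DLVert ℓ, DLEdge ℓ ⟨.v k, hk⟩ X ∧ emb.pos ⟨.u k, hk⟩ < emb.pos X := by
  rcases lt_or_eq_of_le hk with h | h
  · exact ⟨⟨.u (k+1), h⟩, DLEdgeV.vu h,
      emb.topo (show DLEdge ℓ ⟨.u k, hk⟩ ⟨.u (k+1), h⟩ from DLEdgeV.uu h)⟩
  · subst h
    exact ⟨⟨.t1, trivial⟩, DLEdgeV.vt1,
      emb.topo (show DLEdge _ ⟨.u k, hk⟩ ⟨.t1, trivial⟩ from DLEdgeV.ut1)⟩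

/-- An edge out of `w k` whose target follows `v k`. -/
lemma exists_Y (k : ℕ) (hk : k ≤ ℓ) :
    ∃ Y : DLVert ℓ, DLEdge ℓ ⟨.w k, hk⟩ Y ∧ emb.pos ⟨.v k, hk⟩ < emb.pos Y := by
  rcases lt_or_eq_of_le hk with h | h
  · exact ⟨⟨.v (k+1), h⟩, DLEdgeV.wv h,
      emb.topo (show DLEdge ℓ ⟨.v k, hk⟩ ⟨.v (k+1), h⟩ from DLEdgeV.vv h)⟩
  · subst h
    exact ⟨⟨.t2, trivial⟩, DLEdgeV.wt2,
      emb.topo (show DLEdge _ ⟨.v k, hk⟩ ⟨.t2, trivial⟩ from DLEdgeV.vt2)⟩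

/-- An edge out of `u k` whose target follows `v k`. -/
lemma exists_Z (k : ℕ) (hk : k ≤ ℓ) :
    ∃ Z : DLVert ℓ, DLEdge ℓ ⟨.u k, hk⟩ Z ∧ emb.pos ⟨.v k, hk⟩ < emb.pos Z := by
  rcases lt_or_eq_of_le hk with h | h
  · exact ⟨⟨.u (k+1), h⟩, DLEdgeV.uu h,
      emb.topo (show DLEdge ℓ ⟨.v k, hk⟩ ⟨.u (k+1), h⟩ from DLEdgeV.vu h)⟩
  · subst h
    exact ⟨⟨.t1, trivial⟩, DLEdgeV.ut1,
      emb.topo (show DLEdge _ ⟨.v k, hk⟩ ⟨.t1, trivial⟩ from DLEdgeV.vt1)⟩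

/-- Claim A: `u i` precedes `v (i+1)`. -/
lemma claimA (i : ℕ) (hi : i < ℓ) (h0 : i ≤ ℓ) (h1 : i + 1 ≤ ℓ) :
    emb.pos ⟨.u i, h0⟩ < emb.pos ⟨.v (i+1), h1⟩ := by
  by_contra hcon
  have hlt := pos_lt_of_not_lt emb (by simp) hcon
  obtain ⟨p, hpe, hpv⟩ := exists_p emb i h0
  obtain ⟨X, hXe, hXu⟩ := exists_X emb (i+1) h1
  exact noThreeRainbow emb hpe
    (show DLEdge ℓ ⟨.v i, h0⟩ ⟨.u (i+1), h1⟩ from DLEdgeV.vu hi) hXe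
    hpv (emb.topo (show DLEdge ℓ ⟨.v i, h0⟩ ⟨.v (i+1), h1⟩ from DLEdgeV.vv hi))
    hlt (emb.topo (show DLEdge ℓ ⟨.u i, h0⟩ ⟨.u (i+1), h1⟩ from DLEdgeV.uu hi)) hXu

/-- Claim B: `v i` precedes `w (i+1)`. -/
lemma claimB (i : ℕ) (hi : i < ℓ) (h0 : i ≤ ℓ) (h1 : i + 1 ≤ ℓ) :
    emb.pos ⟨.v i, h0⟩ < emb.pos ⟨.w (i+1), h1⟩ := by
  by_contra hcon
  have hlt := pos_lt_of_not_lt emb (by simp) hcon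
  obtain ⟨q, hqe, hqw⟩ := exists_q emb i h0
  obtain ⟨Y, hYe, hYv⟩ := exists_Y emb (i+1) h1
  exact noThreeRainbow emb hqe
    (show DLEdge ℓ ⟨.w i, h0⟩ ⟨.v (i+1), h1⟩ from DLEdgeV.wv hi) hYe
    hqw (emb.topo (show DLEdge ℓ ⟨.w i, h0⟩ ⟨.w (i+1), h1⟩ from DLEdgeV.ww hi))
    hlt (emb.topo (show DLEdge ℓ ⟨.v i, h0⟩ ⟨.v (i+1), h1⟩ from DLEdgeV.vv hi)) hYv

/-- Claim D: `w i` precedes `u (i+1)`. -/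
lemma claimD (i : ℕ) (hi : i < ℓ) (h0 : i ≤ ℓ) (h1 : i + 1 ≤ ℓ) :
    emb.pos ⟨.w i, h0⟩ < emb.pos ⟨.u (i+1), h1⟩ := by
  by_contra hcon
  have hlt := pos_lt_of_not_lt emb (by simp) hcon
  obtain ⟨r, hre, hrv⟩ := exists_r emb i h0
  obtain ⟨Z, hZe, hZv⟩ := exists_Z emb (i+1) h1
  exact noThreeRainbow emb hre
    (show DLEdge ℓ ⟨.v i, h0⟩ ⟨.v (i+1), h1⟩ from DLEdgeV.vv hi) hZe
    hrv (emb.topo (show DLEdge ℓ ⟨.v i, h0⟩ ⟨.u (i+1), h1⟩ from DLEdgeV.vu hi))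
    hlt (emb.topo (show DLEdge ℓ ⟨.w i, h0⟩ ⟨.v (i+1), h1⟩ from DLEdgeV.wv hi)) hZv

/-- Claim E: `u i` precedes `w (i+1)`. -/
lemma claimE (i : ℕ) (hi : i < ℓ) (h0 : i ≤ ℓ) (h1 : i + 1 ≤ ℓ) :
    emb.pos ⟨.u i, h0⟩ < emb.pos ⟨.w (i+1), h1⟩ := by
  by_contra hcon
  have hlt := pos_lt_of_not_lt emb (by simp) hcon
  obtain ⟨p, hpe, hpv⟩ := exists_p emb i h0
  obtain ⟨Y, hYe, hYv⟩ := exists_Y emb (i+1) h1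
  exact noThreeRainbow emb hpe
    (show DLEdge ℓ ⟨.v i, h0⟩ ⟨.v (i+1), h1⟩ from DLEdgeV.vv hi) hYe
    hpv (claimB emb i hi h0 h1) hlt (claimA emb i hi h0 h1) hYv

end DL

/-- in every 2-page book embedding of the double ladder of length
`ℓ`, for each `i < ℓ`, each of `u i, v i, w i` precedes each of
`u (i+1), v (i+1), w (i+1)` in the spine order. -/
theorem doubleLadder_triples_ordered (ℓ : ℕ)
    (emb : TwoPageEmbedding (DLVert ℓ) (DLEdge ℓ)) :
    ∀ i : ℕ, i < ℓ → TripleBefore emb i (i + 1) := by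
  intro i hi x y hx hy
  have h1 : i + 1 ≤ ℓ := hi
  obtain ⟨xv, xp⟩ := x
  obtain ⟨yv, yp⟩ := y
  rcases hx with hx | hx | hx <;> rcases hy with hy | hy | hy <;>
    obtain rfl : xv = _ := hx <;> obtain rfl : yv = _ := hy
  · exact emb.topo (show DLEdge ℓ ⟨.u i, xp⟩ ⟨.u (i+1), yp⟩ from DLEdgeV.uu hi)
  · exact claimA emb i hi xp yp
  · exact claimE emb i hi xp yp
  · exact emb.topo (show DLEdge ℓ ⟨.v i, xp⟩ ⟨.u (i+1), yp⟩ from DLEdgeV.vu hi)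
  · exact emb.topo (show DLEdge ℓ ⟨.v i, xp⟩ ⟨.v (i+1), yp⟩ from DLEdgeV.vv hi)
  · exact claimB emb i hi xp yp
  · exact claimD emb i hi xp yp
  · exact emb.topo (show DLEdge ℓ ⟨.w i, xp⟩ ⟨.v (i+1), yp⟩ from DLEdgeV.wv hi)
  · exact emb.topo (show DLEdge ℓ ⟨.w i, xp⟩ ⟨.w (i+1), yp⟩ from DLEdgeV.ww hi)
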